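/- If U is an m×n row-quantum Latin rectangle in ℋ_n with cardinality c₁ and V is an n×m row-quantum Latin rectangle in ℋ_m with cardinality c₂, then the QLS(mn) W defined by w_{i,j;k,l} = u_{i,j+k} ⊗ v_{j,i+l} (indices mod n and mod m respectively) has cardinality c₁·c₂. -/

import Mathlib

noncomputable section

/-- Two vectors are identified when they differ by a global phase `e^{iθ}`. -/
def PhaseEq {E : Type*} [AddCommGroup E] [Module ℂ E] (u v : E) : Prop :=
  ∃ θ : ℝ, u = Complex.exp (θ * Complex.I) • v

/-- Concrete tensor product `u ⊗ v` of Euclidean space vectors. -/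
def tens {ι κ : Type*} (u : EuclideanSpace ℂ ι) (v : EuclideanSpace ℂ κ) :
    EuclideanSpace ℂ (ι × κ) :=
  (WithLp.equiv 2 _).symm (fun p : ι × κ => u p.1 * v p.2)

/-- An array (with arbitrary finite index types) all of whose rows and columns
are orthonormal families. -/
def IsQLSIdx {ι κ E : Type*} [NormedAddCommGroup E] [InnerProductSpace ℂ E]
    (M : ι → κ → E) : Prop :=
  (∀ i, Orthonormal ℂ (fun j => M i j)) ∧ (∀ j, Orthonormal ℂ (fun i => M i j))

/-- The family `f` has exactly `c` distinct members up to global phase. -/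
def FamCardEq {ι E : Type*} [AddCommGroup E] [Module ℂ E] (f : ι → E) (c : ℕ) : Prop :=
  ∃ reps : Fin c → E,
    (∀ i, ∃ k, PhaseEq (f i) (reps k)) ∧
    (∀ k, ∃ i, PhaseEq (f i) (reps k)) ∧
    (∀ k l, k ≠ l → ¬ PhaseEq (reps k) (reps l))

lemma tens_apply {ι κ : Type*} (u : EuclideanSpace ℂ ι) (v : EuclideanSpace ℂ κ) (p : ι × κ) :
    tens u v p = u p.1 * v p.2 := rfl

lemma phaseEq_refl {E : Type*} [AddCommGroup E] [Module ℂ E] (u : E) : PhaseEq u u :=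
  ⟨0, by simp⟩

lemma phaseEq_symm {E : Type*} [AddCommGroup E] [Module ℂ E] {u v : E}
    (h : PhaseEq u v) : PhaseEq v u := by
  obtain ⟨θ, rfl⟩ := h
  refine ⟨-θ, ?_⟩
  rw [smul_smul, ← Complex.exp_add]
  push_cast
  ring_nf
  simp

lemma phaseEq_trans {E : Type*} [AddCommGroup E] [Module ℂ E] {u v w : E}
    (h1 : PhaseEq u v) (h2 : PhaseEq v w) : PhaseEq u w := by
  obtain ⟨θ, rfl⟩ := h1
  obtain ⟨φ, rfl⟩ := h2
  refine ⟨θ + φ, ?_⟩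
  rw [smul_smul, ← Complex.exp_add]
  push_cast
  ring_nf

lemma phaseEq_norm {E : Type*} [NormedAddCommGroup E] [NormedSpace ℂ E] {u v : E}
    (h : PhaseEq u v) : ‖u‖ = ‖v‖ := by
  obtain ⟨θ, rfl⟩ := h
  simp [norm_smul, Complex.norm_exp_ofReal_mul_I]

lemma phaseEq_of_abs_one {E : Type*} [AddCommGroup E] [Module ℂ E] {u v : E} {c : ℂ}
    (hc : ‖c‖ = 1) (h : u = c • v) : PhaseEq u v := by
  refine ⟨c.arg, ?_⟩
  rw [h]
  congr 1
  have := Complex.norm_mul_exp_arg_mul_I c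
  rw [hc] at this
  simpa using this.symm

lemma phaseEq_tens {ι κ : Type*} {u u' : EuclideanSpace ℂ ι} {v v' : EuclideanSpace ℂ κ}
    (h1 : PhaseEq u u') (h2 : PhaseEq v v') : PhaseEq (tens u v) (tens u' v') := by
  obtain ⟨θ, rfl⟩ := h1
  obtain ⟨φ, rfl⟩ := h2
  refine ⟨θ + φ, PiLp.ext fun p => ?_⟩
  show (Complex.exp (θ*Complex.I) * u' p.1) * (Complex.exp (φ*Complex.I) * v' p.2)
      = Complex.exp ((θ+φ : ℝ)*Complex.I) * (u' p.1 * v' p.2)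
  rw [Complex.ofReal_add, add_mul, Complex.exp_add]
  ring

lemma exists_coord_ne_zero {ι : Type*} [Fintype ι] {u : EuclideanSpace ℂ ι}
    (hu : u ≠ 0) : ∃ i, u i ≠ 0 := by
  by_contra h
  push_neg at h
  exact hu (PiLp.ext fun i => h i)

lemma phaseEq_tens_split {ι κ : Type*} [Fintype ι] [Fintype κ]
    {u u' : EuclideanSpace ℂ ι} {v v' : EuclideanSpace ℂ κ}
    (hu : ‖u‖ = 1) (hu' : ‖u'‖ = 1) (hv : ‖v‖ = 1) (hv' : ‖v'‖ = 1)
    (h : PhaseEq (tens u v) (tens u' v')) : PhaseEq u u' ∧ PhaseEq v v' := by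
  obtain ⟨θ, h⟩ := h
  set c := Complex.exp (θ * Complex.I) with hc
  have hcabs : ‖c‖ = 1 := Complex.norm_exp_ofReal_mul_I θ
  have heq : ∀ (i : ι) (j : κ), u i * v j = c * (u' i * v' j) := by
    intro i j
    have := congrArg (fun x => x (i, j)) h
    simpa [tens_apply] using this
  have hvne : v ≠ 0 := by intro h0; rw [h0] at hv; simp at hv
  obtain ⟨j₀, hj₀⟩ := exists_coord_ne_zero hvne
  set μ : ℂ := c * v' j₀ / v j₀ with hμ
  have hueq : u = μ • u' := by
    refine PiLp.ext fun i => ?_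
    show u i = μ * u' i
    rw [hμ]
    field_simp
    linear_combination (heq i j₀)
  have hμabs : ‖μ‖ = 1 := by
    have : ‖u‖ = ‖μ‖ * ‖u'‖ := by rw [hueq, norm_smul]
    rw [hu, hu'] at this
    linarith
  have hP1 : PhaseEq u u' := phaseEq_of_abs_one hμabs hueq
  have hμne : μ ≠ 0 := by
    intro h0; rw [h0] at hμabs; simp at hμabs
  have hune : u' ≠ 0 := by intro h0; rw [h0] at hu'; simp at hu'
  obtain ⟨i₀, hi₀⟩ := exists_coord_ne_zero hune
  clear_value μ
  have hveq : v = (c / μ) • v' := by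
    refine PiLp.ext fun j => ?_
    show v j = (c / μ) * v' j
    have h1 : u i₀ * v j = c * (u' i₀ * v' j) := heq i₀ j
    have h2 : u i₀ = μ * u' i₀ := by rw [hueq]; rfl
    rw [h2] at h1
    have h3 : v j * μ * u' i₀ = c * v' j * u' i₀ := by linear_combination h1
    have h4 : v j * μ = c * v' j := mul_right_cancel₀ hi₀ h3
    field_simp
    linear_combination h4
  have : ‖c / μ‖ = 1 := by
    rw [norm_div, hcabs, hμabs]; norm_num
  exact ⟨hP1, phaseEq_of_abs_one this hveq⟩

/-- Product construction and cardinality: if `U` has cardinality `c₁` and `V`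
has cardinality `c₂`, then the QLS(mn) `W` with entries
`w_{i,j;k,l} = u_{i,j+k} ⊗ v_{j,i+l}` has cardinality `c₁ · c₂`. -/
theorem product_construction_card (m n : ℕ)
    (U : Fin m → Fin n → EuclideanSpace ℂ (Fin n))
    (V : Fin n → Fin m → EuclideanSpace ℂ (Fin m))
    (hU : ∀ i, Orthonormal ℂ (fun j => U i j))
    (hV : ∀ j, Orthonormal ℂ (fun l => V j l))
    (c₁ c₂ : ℕ)
    (hc₁ : FamCardEq (fun p : Fin m × Fin n => U p.1 p.2) c₁)
    (hc₂ : FamCardEq (fun p : Fin n × Fin m => V p.1 p.2) c₂) :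
    FamCardEq
      (fun q : (Fin m × Fin n) × (Fin n × Fin m) =>
        tens (U q.1.1 (q.2.1 + q.1.2)) (V q.2.1 (q.1.1 + q.2.2)))
      (c₁ * c₂) := by
  obtain ⟨r₁, hr₁a, hr₁b, hr₁c⟩ := hc₁
  obtain ⟨r₂, hr₂a, hr₂b, hr₂c⟩ := hc₂
  -- norms of reps are 1
  have hUnorm : ∀ i j, ‖U i j‖ = 1 := fun i j => (hU i).1 j
  have hVnorm : ∀ j l, ‖V j l‖ = 1 := fun j l => (hV j).1 l
  have hr₁norm : ∀ k, ‖r₁ k‖ = 1 := by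
    intro k
    obtain ⟨p, hp⟩ := hr₁b k
    rw [← phaseEq_norm hp]
    exact hUnorm p.1 p.2
  have hr₂norm : ∀ k, ‖r₂ k‖ = 1 := by
    intro k
    obtain ⟨p, hp⟩ := hr₂b k
    rw [← phaseEq_norm hp]
    exact hVnorm p.1 p.2
  refine ⟨fun k => tens (r₁ (finProdFinEquiv.symm k).1) (r₂ (finProdFinEquiv.symm k).2),
    ?_, ?_, ?_⟩
  · rintro ⟨⟨i, j⟩, ⟨j', l⟩⟩
    obtain ⟨k₁, hk₁⟩ := hr₁a (i, j' + j)
    obtain ⟨k₂, hk₂⟩ := hr₂a (j', i + l)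
    refine ⟨finProdFinEquiv (k₁, k₂), ?_⟩
    simp only [Equiv.symm_apply_apply]
    exact phaseEq_tens hk₁ hk₂
  · intro k
    obtain ⟨⟨i, j⟩, hp⟩ := hr₁b (finProdFinEquiv.symm k).1
    obtain ⟨⟨j', l⟩, hq⟩ := hr₂b (finProdFinEquiv.symm k).2
    haveI : NeZero n := ⟨j.pos.ne'⟩
    haveI : NeZero m := ⟨i.pos.ne'⟩
    refine ⟨((i, j - j'), (j', l - i)), ?_⟩
    have e1 : j' + (j - j') = j := by abel
    have e2 : i + (l - i) = l := by abel
    simp only [e1, e2]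
    exact phaseEq_tens hp hq
  · intro k l hkl hP
    obtain ⟨h1, h2⟩ := phaseEq_tens_split
      (hr₁norm _) (hr₁norm _) (hr₂norm _) (hr₂norm _) hP
    by_cases hfst : (finProdFinEquiv.symm k).1 = (finProdFinEquiv.symm l).1
    · have hsnd : (finProdFinEquiv.symm k).2 ≠ (finProdFinEquiv.symm l).2 := by
        intro h
        exact hkl (finProdFinEquiv.symm.injective (Prod.ext hfst h))
      exact hr₂c _ _ hsnd h2
    · exact hr₁c _ _ hfst h1
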